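/- Let p be an even positive integer with p ≡ 2 (mod 4) and let d ≥ 1. Then every equilateral set in ℓ_p^d has cardinality at most (p/2)·d + 1. -/

import Mathlib

open Finset

lemma swap_sq {α ι : Type*} [Fintype α] [Fintype ι] (g : α → ℝ) (a : ι → ℝ) (F : ι → α → ℝ) :
    ∑ x, ∑ y, g x * g y * (∑ j, a j * (F j x * F j y))
      = ∑ j, a j * (∑ x, g x * F j x) ^ 2 := by
  have hr : ∀ j, a j * (∑ x, g x * F j x) ^ 2
      = ∑ x, ∑ y, a j * ((g x * F j x) * (g y * F j y)) := by
    intro j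
    rw [sq, Finset.sum_mul_sum, Finset.mul_sum]
    exact Finset.sum_congr rfl fun x _ => by rw [Finset.mul_sum]
  calc ∑ x, ∑ y, g x * g y * (∑ j, a j * (F j x * F j y))
      = ∑ x, ∑ j, ∑ y, g x * g y * (a j * (F j x * F j y)) := by
        refine Finset.sum_congr rfl fun x _ => ?_
        rw [show (∑ y, g x * g y * ∑ j, a j * (F j x * F j y))
            = ∑ y, ∑ j, g x * g y * (a j * (F j x * F j y)) from
          Finset.sum_congr rfl fun y _ => Finset.mul_sum _ _ _]
        exact Finset.sum_comm (f := fun y j => g x * g y * (a j * (F j x * F j y)))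
    _ = ∑ j, ∑ x, ∑ y, g x * g y * (a j * (F j x * F j y)) :=
        Finset.sum_comm (f := fun x j => ∑ y, g x * g y * (a j * (F j x * F j y)))
    _ = ∑ j, a j * (∑ x, g x * F j x) ^ 2 := by
        refine Finset.sum_congr rfl fun j _ => ?_
        rw [hr j]
        exact Finset.sum_congr rfl fun x _ => Finset.sum_congr rfl fun y _ => by ring


lemma key_rank {V ι κ : Type*} [DecidableEq V] [Fintype ι] [Fintype κ]
    (S : Finset V) (a : ι → ℝ) (b : κ → ℝ) (ha : ∀ j, 0 ≤ a j) (hb : ∀ k, 0 ≤ b k)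
    (F : ι → V → ℝ) (G : κ → V → ℝ) (c : ℝ) (hc : 0 < c)
    (h : ∀ x ∈ S, ∀ y ∈ S,
      (∑ j, a j * (F j x * F j y)) - (∑ k, b k * (G k x * G k y))
        = if x = y then c else 0) :
    S.card ≤ Fintype.card ι := by
  by_contra hlt
  push_neg at hlt
  -- the family of vectors
  set v : {x // x ∈ S} → (ι → ℝ) := fun x => fun j => F j x.1 with hv
  have hnli : ¬ LinearIndependent ℝ v := by
    intro hli
    have := hli.fintype_card_le_finrank
    rw [Module.finrank_fintype_fun_eq_card] at this
    simp only [Fintype.card_coe] at this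
    omega
  rw [Fintype.not_linearIndependent_iff] at hnli
  obtain ⟨g, hg0, x₀, hx₀⟩ := hnli
  -- for each j, the linear combination vanishes
  have hFlin : ∀ j, ∑ x : {x // x ∈ S}, g x * F j x.1 = 0 := by
    intro j
    have := congrFun hg0 j
    simpa using this
  -- compute the quadratic form two ways
  have hQ : ∑ x : {x // x ∈ S}, ∑ y : {x // x ∈ S},
      g x * g y * ((∑ j, a j * (F j x.1 * F j y.1)) - (∑ k, b k * (G k x.1 * G k y.1)))
      = c * ∑ x : {x // x ∈ S}, g x ^ 2 := by
    rw [Finset.mul_sum]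
    refine Finset.sum_congr rfl fun x _ => ?_
    rw [Finset.sum_eq_single x]
    · rw [h x.1 x.2 x.1 x.2, if_pos rfl]; ring
    · intro y _ hyx
      rw [h x.1 x.2 y.1 y.2, if_neg (fun e => hyx (Subtype.ext e.symm))]
      ring
    · intro hx; exact absurd (Finset.mem_univ x) hx
  have hQ2 : ∑ x : {x // x ∈ S}, ∑ y : {x // x ∈ S},
      g x * g y * ((∑ j, a j * (F j x.1 * F j y.1)) - (∑ k, b k * (G k x.1 * G k y.1)))
      = (∑ j, a j * (∑ x : {x // x ∈ S}, g x * F j x.1) ^ 2)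
        - (∑ k, b k * (∑ x : {x // x ∈ S}, g x * G k x.1) ^ 2) := by
    rw [← swap_sq g a (fun j x => F j x.1), ← swap_sq g b (fun k x => G k x.1),
      ← Finset.sum_sub_distrib]
    refine Finset.sum_congr rfl fun x _ => ?_
    rw [← Finset.sum_sub_distrib]
    exact Finset.sum_congr rfl fun y _ => by ring
  rw [hQ2] at hQ
  have hle : (∑ j, a j * (∑ x : {x // x ∈ S}, g x * F j x.1) ^ 2)
      - (∑ k, b k * (∑ x : {x // x ∈ S}, g x * G k x.1) ^ 2) ≤ 0 := by
    have h1 : (∑ j, a j * (∑ x : {x // x ∈ S}, g x * F j x.1) ^ 2) = 0 := by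
      refine Finset.sum_eq_zero fun j _ => ?_
      rw [hFlin j]; ring
    have h2 : 0 ≤ ∑ k, b k * (∑ x : {x // x ∈ S}, g x * G k x.1) ^ 2 :=
      Finset.sum_nonneg fun k _ => mul_nonneg (hb k) (sq_nonneg _)
    linarith
  have hpos : 0 < c * ∑ x : {x // x ∈ S}, g x ^ 2 := by
    refine mul_pos hc ?_
    have : 0 < g x₀ ^ 2 := by positivity
    refine Finset.sum_pos' (fun x _ => sq_nonneg _) ⟨x₀, Finset.mem_univ _, this⟩
  linarith [hQ]

lemma lemA (m : ℕ) (hm : 1 ≤ m) (a b : ℝ) :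
    a^(2*m) + b^(2*m) - (a-b)^(2*m)
      = ∑ k ∈ Finset.Ico 1 (2*m),
          (-(-1:ℝ)^k) * (Nat.choose (2*m) k : ℝ) * (a^k * b^(2*m-k)) := by
  have hsign : ∀ k : ℕ, (-1:ℝ)^(k + 2*m) = (-1:ℝ)^k := by
    intro k; rw [pow_add, pow_mul]; norm_num
  rw [sub_pow, Finset.range_eq_Ico,
    ← Finset.sum_Ico_consecutive _ (Nat.zero_le 1) (by omega : 1 ≤ 2*m+1),
    ← Finset.sum_Ico_consecutive _ (by omega : (1:ℕ) ≤ 2*m) (by omega : 2*m ≤ 2*m+1)]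
  have h0 : ∑ k ∈ Finset.Ico 0 1,
      (-1:ℝ)^(k+2*m) * a^k * b^(2*m-k) * (Nat.choose (2*m) k : ℝ) = b^(2*m) := by
    rw [Finset.sum_Ico_eq_sum_range]
    simp [hsign]
  have h2m : ∑ k ∈ Finset.Ico (2*m) (2*m+1),
      (-1:ℝ)^(k+2*m) * a^k * b^(2*m-k) * (Nat.choose (2*m) k : ℝ) = a^(2*m) := by
    rw [Finset.sum_Ico_eq_sum_range]
    simp only [Nat.add_sub_cancel_left, Finset.sum_range_one, Nat.add_zero, Nat.sub_self]
    rw [hsign, pow_mul]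
    norm_num
  rw [h0, h2m]
  have hmid : ∑ k ∈ Finset.Ico 1 (2*m),
      (-1:ℝ)^(k+2*m) * a^k * b^(2*m-k) * (Nat.choose (2*m) k : ℝ)
      = -∑ k ∈ Finset.Ico 1 (2*m),
          (-(-1:ℝ)^k) * (Nat.choose (2*m) k : ℝ) * (a^k * b^(2*m-k)) := by
    rw [← Finset.sum_neg_distrib]
    exact Finset.sum_congr rfl fun k _ => by rw [hsign]; ring
  rw [hmid]; ring

lemma lemB (m : ℕ) (hm : Odd m) (a b : ℝ) :
    ∑ k ∈ Finset.Ico 1 (2*m),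
        (-(-1:ℝ)^k) * (Nat.choose (2*m) k : ℝ) * (a^k * b^(2*m-k))
      = (Nat.choose (2*m) m : ℝ) * (a^m * b^m)
        + ∑ k ∈ Finset.Ico 1 m,
            (-(-1:ℝ)^k) * (Nat.choose (2*m) k : ℝ)
              * (a^k * b^(2*m-k) + a^(2*m-k) * b^k) := by
  have hm1 : 1 ≤ m := hm.pos
  rw [← Finset.sum_Ico_consecutive _ (hm1 : 1 ≤ m) (by omega : m ≤ 2*m),
    Finset.sum_eq_sum_Ico_succ_bot (by omega : m < 2*m)]
  have hmidterm : (-(-1:ℝ)^m) * (Nat.choose (2*m) m : ℝ) * (a^m * b^(2*m-m))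
      = (Nat.choose (2*m) m : ℝ) * (a^m * b^m) := by
    rw [hm.neg_one_pow, (by omega : 2*m - m = m)]; ring
  have hrefl : ∑ k ∈ Finset.Ico (m+1) (2*m),
      (-(-1:ℝ)^k) * (Nat.choose (2*m) k : ℝ) * (a^k * b^(2*m-k))
      = ∑ k ∈ Finset.Ico 1 m,
          (-(-1:ℝ)^k) * (Nat.choose (2*m) k : ℝ) * (a^(2*m-k) * b^k) := by
    refine Finset.sum_nbij' (fun k => 2*m - k) (fun k => 2*m - k) ?_ ?_ ?_ ?_ ?_
    · intro k hk; simp only [Finset.mem_Ico] at hk ⊢; omega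
    · intro k hk; simp only [Finset.mem_Ico] at hk ⊢; omega
    · intro k hk; simp only [Finset.mem_Ico] at hk; omega
    · intro k hk; simp only [Finset.mem_Ico] at hk; omega
    · intro k hk
      rw [Finset.mem_Ico] at hk
      have hk2 : k ≤ 2*m := by omega
      have hs : (-1:ℝ)^(2*m-k) = (-1:ℝ)^k := by
        have h1 : (-1:ℝ)^(2*m-k) * (-1:ℝ)^k = 1 := by
          rw [← pow_add, (by omega : 2*m - k + k = 2*m), pow_mul]; norm_num
        have h2 : ((-1:ℝ)^k) * ((-1:ℝ)^k) = 1 := by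
          rw [← pow_add, ← two_mul, pow_mul]; norm_num
        calc (-1:ℝ)^(2*m-k) = (-1:ℝ)^(2*m-k) * ((-1:ℝ)^k * (-1:ℝ)^k) := by
              rw [h2, mul_one]
          _ = ((-1:ℝ)^(2*m-k) * (-1:ℝ)^k) * (-1:ℝ)^k := by ring
          _ = (-1:ℝ)^k := by rw [h1, one_mul]
      rw [Nat.choose_symm hk2, Nat.sub_sub_self hk2, hs]
  rw [hmidterm, hrefl]
  have hcomb : (∑ k ∈ Finset.Ico 1 m,
        (-(-1:ℝ)^k) * (Nat.choose (2*m) k : ℝ) * (a^k * b^(2*m-k)))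
      + (∑ k ∈ Finset.Ico 1 m,
        (-(-1:ℝ)^k) * (Nat.choose (2*m) k : ℝ) * (a^(2*m-k) * b^k))
      = ∑ k ∈ Finset.Ico 1 m,
          (-(-1:ℝ)^k) * (Nat.choose (2*m) k : ℝ)
            * (a^k * b^(2*m-k) + a^(2*m-k) * b^k) := by
    rw [← Finset.sum_add_distrib]
    exact Finset.sum_congr rfl fun k _ => by ring
  linarith [hcomb]

lemma lemC (m : ℕ) (hm : Odd m) (a b : ℝ) :
    (Nat.choose (2*m) m : ℝ) * (a^m * b^m)
      + ∑ k ∈ Finset.Ico 1 m,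
          ((Nat.choose (2*m) k : ℝ)/2) *
            ((a^(2*m-k) - (-1:ℝ)^k * a^k) * (b^(2*m-k) - (-1:ℝ)^k * b^k)
              - (a^(2*m-k) + (-1:ℝ)^k * a^k) * (b^(2*m-k) + (-1:ℝ)^k * b^k))
      = a^(2*m) + b^(2*m) - (a-b)^(2*m) := by
  rw [lemA m hm.pos a b, lemB m hm a b]
  congr 1
  refine Finset.sum_congr rfl fun k _ => ?_
  ring

noncomputable def rFun (d m : ℕ) (lam : ℝ) (x : Fin d → ℝ) : ℝ :=
  lam^(2*m)/2 - ∑ i, (x i)^(2*m)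

noncomputable def Fa (d m : ℕ) (lam : ℝ) : Option (Fin d × Fin m) → (Fin d → ℝ) → ℝ
  | none => fun x => 1 + rFun d m lam x
  | some (i, k) => fun x =>
      if k.1 = 0 then (x i)^m else (x i)^(2*m - k.1) - (-1:ℝ)^k.1 * (x i)^k.1

noncomputable def Ga (d m : ℕ) (lam : ℝ) : Option (Fin d × Fin m) → (Fin d → ℝ) → ℝ
  | none => fun x => 1 - rFun d m lam x
  | some (i, k) => fun x =>
      if k.1 = 0 then 0 else (x i)^(2*m - k.1) + (-1:ℝ)^k.1 * (x i)^k.1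

noncomputable def ca (d m : ℕ) : Option (Fin d × Fin m) → ℝ
  | none => 1/2
  | some (_, k) => if k.1 = 0 then (Nat.choose (2*m) m : ℝ) else (Nat.choose (2*m) k.1 : ℝ)/2

noncomputable def cb (d m : ℕ) : Option (Fin d × Fin m) → ℝ
  | none => 1/2
  | some (_, k) => if k.1 = 0 then 0 else (Nat.choose (2*m) k.1 : ℝ)/2

lemma ca_nonneg (d m : ℕ) (j : Option (Fin d × Fin m)) : 0 ≤ ca d m j := by
  match j with
  | none => norm_num [ca]
  | some (i, k) =>
      simp only [ca]
      split <;> positivity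

lemma cb_nonneg (d m : ℕ) (j : Option (Fin d × Fin m)) : 0 ≤ cb d m j := by
  match j with
  | none => norm_num [cb]
  | some (i, k) =>
      simp only [cb]
      split <;> positivity

lemma main_id (d m : ℕ) (hm : Odd m) (lam : ℝ) (x y : Fin d → ℝ) :
    (∑ j, ca d m j * (Fa d m lam j x * Fa d m lam j y))
      - (∑ k, cb d m k * (Ga d m lam k x * Ga d m lam k y))
      = lam^(2*m) - ∑ i, (x i - y i)^(2*m) := by
  rw [Fintype.sum_option, Fintype.sum_option, Fintype.sum_prod_type, Fintype.sum_prod_type]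
  have hnone : ca d m none * (Fa d m lam none x * Fa d m lam none y)
      - cb d m none * (Ga d m lam none x * Ga d m lam none y)
      = (lam^(2*m)/2 - ∑ i, (x i)^(2*m)) + (lam^(2*m)/2 - ∑ i, (y i)^(2*m)) := by
    simp only [ca, cb, Fa, Ga, rFun]; ring
  have hper : ∀ i : Fin d,
      (∑ k : Fin m, ca d m (some (i,k)) * (Fa d m lam (some (i,k)) x * Fa d m lam (some (i,k)) y))
      - (∑ k : Fin m, cb d m (some (i,k)) * (Ga d m lam (some (i,k)) x * Ga d m lam (some (i,k)) y))
      = (x i)^(2*m) + (y i)^(2*m) - (x i - y i)^(2*m) := by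
    intro i
    set f : ℕ → ℝ := fun k : ℕ => (if k = 0 then (Nat.choose (2*m) m : ℝ) * ((x i)^m * (y i)^m)
            else ((Nat.choose (2*m) k : ℝ)/2) *
              (((x i)^(2*m-k) - (-1:ℝ)^k * (x i)^k) * ((y i)^(2*m-k) - (-1:ℝ)^k * (y i)^k)
                - ((x i)^(2*m-k) + (-1:ℝ)^k * (x i)^k) * ((y i)^(2*m-k) + (-1:ℝ)^k * (y i)^k))) with hf
    have hsum : ∀ k : Fin m,
        ca d m (some (i,k)) * (Fa d m lam (some (i,k)) x * Fa d m lam (some (i,k)) y)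
          - cb d m (some (i,k)) * (Ga d m lam (some (i,k)) x * Ga d m lam (some (i,k)) y)
        = f k.1 := by
      intro k
      simp only [hf, ca, cb, Fa, Ga]
      by_cases hk : k.1 = 0
      · simp only [if_pos hk]; ring
      · simp only [if_neg hk]; ring
    rw [← Finset.sum_sub_distrib]
    rw [Finset.sum_congr rfl (fun k _ => hsum k)]
    rw [Fin.sum_univ_eq_sum_range f m]
    rw [Finset.range_eq_Ico, Finset.sum_eq_sum_Ico_succ_bot hm.pos]
    rw [show f 0 = (Nat.choose (2*m) m : ℝ) * ((x i)^m * (y i)^m) from by simp [hf]]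
    have hico : ∑ k ∈ Finset.Ico 1 m, f k
        = ∑ k ∈ Finset.Ico 1 m,
            ((Nat.choose (2*m) k : ℝ)/2) *
            (((x i)^(2*m-k) - (-1:ℝ)^k * (x i)^k) * ((y i)^(2*m-k) - (-1:ℝ)^k * (y i)^k)
              - ((x i)^(2*m-k) + (-1:ℝ)^k * (x i)^k) * ((y i)^(2*m-k) + (-1:ℝ)^k * (y i)^k)) := by
      refine Finset.sum_congr rfl fun k hk => ?_
      rw [Finset.mem_Ico] at hk
      rw [hf]
      simp only []
      rw [if_neg (by omega : ¬ k = 0)]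
    rw [hico]
    exact lemC m hm (x i) (y i)
  have hsplit : (∑ i : Fin d, ∑ k : Fin m,
        ca d m (some (i,k)) * (Fa d m lam (some (i,k)) x * Fa d m lam (some (i,k)) y))
      - (∑ i : Fin d, ∑ k : Fin m,
        cb d m (some (i,k)) * (Ga d m lam (some (i,k)) x * Ga d m lam (some (i,k)) y))
      = ∑ i : Fin d, ((x i)^(2*m) + (y i)^(2*m) - (x i - y i)^(2*m)) := by
    rw [← Finset.sum_sub_distrib]
    exact Finset.sum_congr rfl fun i _ => hper i
  have hexp : ∑ i : Fin d, ((x i)^(2*m) + (y i)^(2*m) - (x i - y i)^(2*m))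
      = (∑ i, (x i)^(2*m)) + (∑ i, (y i)^(2*m)) - ∑ i, (x i - y i)^(2*m) := by
    rw [Finset.sum_sub_distrib, Finset.sum_add_distrib]
  -- combine everything linearly
  have goal : (ca d m none * (Fa d m lam none x * Fa d m lam none y)
        + ∑ i : Fin d, ∑ k : Fin m,
            ca d m (some (i,k)) * (Fa d m lam (some (i,k)) x * Fa d m lam (some (i,k)) y))
      - (cb d m none * (Ga d m lam none x * Ga d m lam none y)
        + ∑ i : Fin d, ∑ k : Fin m,
            cb d m (some (i,k)) * (Ga d m lam (some (i,k)) x * Ga d m lam (some (i,k)) y))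
      = lam^(2*m) - ∑ i, (x i - y i)^(2*m) := by
    have h1 := hnone
    have h2 := hsplit
    rw [hexp] at h2
    linarith [h1, h2]
  exact goal
/-- A finite set `S` in `ℝ^d` is `lam`-equilateral for the `ℓ_p` norm
(`‖x‖_p = (∑ i, |x i| ^ p) ^ (1/p)`). -/
def IsEquilateralLp {d : ℕ} (p : ℝ) (lam : ℝ) (S : Finset (Fin d → ℝ)) : Prop :=
  ∀ x ∈ S, ∀ y ∈ S, x ≠ y → (∑ i, |x i - y i| ^ p) ^ (1 / p) = lam

/-- Kusner's problem, upper bound for `p ≡ 2 (mod 4)`: every equilateral set in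
`ℓ_p^d` has at most `(p/2) d + 1` points. -/
theorem equilateral_card_le_of_mod_four_eq_two (p d : ℕ) (hp : p % 4 = 2)
    (hd : 1 ≤ d) (S : Finset (Fin d → ℝ)) (lam : ℝ) (hlam : 0 < lam)
    (hS : IsEquilateralLp (p : ℝ) lam S) :
    S.card ≤ (p / 2) * d + 1 := by
  classical
  set m := p / 2 with hmdef
  have hp2 : p = 2 * m := by omega
  have hmodd : Odd m := Nat.odd_iff.mpr (by omega)
  have hm1 : 1 ≤ m := hmodd.pos
  have hmain : ∀ x ∈ S, ∀ y ∈ S,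
      (∑ j, ca d m j * (Fa d m lam j x * Fa d m lam j y))
        - (∑ k, cb d m k * (Ga d m lam k x * Ga d m lam k y))
      = if x = y then lam^(2*m) else 0 := by
    intro x hx y hy
    rw [main_id d m hmodd lam x y]
    by_cases hxy : x = y
    · subst hxy
      rw [if_pos rfl]
      have hz : ∑ i, (x i - x i)^(2*m) = 0 :=
        Finset.sum_eq_zero fun i _ => by
          rw [sub_self, zero_pow (by omega : 2*m ≠ 0)]
      rw [hz, sub_zero]
    · rw [if_neg hxy]
      have hA := hS x hx y hy hxy
      have hnn : 0 ≤ ∑ i, |x i - y i| ^ (p:ℝ) :=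
        Finset.sum_nonneg fun i _ => Real.rpow_nonneg (abs_nonneg _) _
      have hp0 : p ≠ 0 := by omega
      have h1 : ∑ i, |x i - y i| ^ (p:ℝ) = lam ^ p := by
        calc ∑ i, |x i - y i| ^ (p:ℝ)
            = ((∑ i, |x i - y i| ^ (p:ℝ)) ^ ((p:ℝ)⁻¹)) ^ p :=
              (Real.rpow_inv_natCast_pow hnn hp0).symm
          _ = ((∑ i, |x i - y i| ^ (p:ℝ)) ^ (1/(p:ℝ))) ^ p := by rw [one_div]
          _ = lam ^ p := by rw [hA]
      have h2 : ∑ i, |x i - y i| ^ (p:ℝ) = ∑ i, (x i - y i)^(2*m) := by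
        refine Finset.sum_congr rfl fun i _ => ?_
        rw [Real.rpow_natCast, Even.pow_abs (⟨m, by omega⟩ : Even p), hp2]
      have h3 : ∑ i, (x i - y i)^(2*m) = lam^(2*m) := by
        rw [← h2, h1, hp2]
      rw [h3, sub_self]
  have hkey := key_rank S (ca d m) (cb d m) (ca_nonneg d m) (cb_nonneg d m)
    (Fa d m lam) (Ga d m lam) (lam^(2*m)) (pow_pos hlam _) hmain
  calc S.card ≤ Fintype.card (Option (Fin d × Fin m)) := hkey
    _ = d * m + 1 := by simp
    _ = (p / 2) * d + 1 := by rw [Nat.mul_comm, hmdef]
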